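/- (Probability of the high-density band) For every privacy budget ε > 0, scale h > 0, center H̄ ∈ ℝ, bias Ā ∈ ℝ, and input x ∈ [H̄−h, H̄+h], the probability that the Zeal output lands in the central band equals p·(C−h) = e^{ε/2}/(e^{ε/2}+1); that is, ∫_{L(x)}^{R(x)} g_x(t) dt = e^{ε/2}/(e^{ε/2}+1), and consequently the probability of landing in the two tails equals 1/(e^{ε/2}+1). -/

import Mathlib

open MeasureTheory Real

/-- Probability level `p` of the Zeal piecewise density. -/
noncomputable def zealP (ε h : ℝ) : ℝ :=
  (Real.exp ε - Real.exp (ε / 2)) / (2 * h * (Real.exp (ε / 2) + 1))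

/-- Output half-width `C` of the Zeal mechanism. -/
noncomputable def zealC (ε h : ℝ) : ℝ :=
  h * (Real.exp (ε / 2) + 1) / (Real.exp (ε / 2) - 1)

/-- Left endpoint `L(x)` of the central (high-probability) band. -/
noncomputable def zealL (ε h H A x : ℝ) : ℝ :=
  (zealC ε h + h) / 2 * ((x - H) / h) - (zealC ε h - h) / 2 + H + A

/-- Right endpoint `R(x)` of the central band. -/
noncomputable def zealR (ε h H A x : ℝ) : ℝ :=
  zealL ε h H A x + zealC ε h - h

/-- The Zeal probability density `g_x` with parameters `(ε, h, H̄, Ā)`. -/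
noncomputable def zealG (ε h H A x t : ℝ) : ℝ :=
  if H - zealC ε h + A ≤ t ∧ t < zealL ε h H A x then zealP ε h / Real.exp ε
  else if zealL ε h H A x ≤ t ∧ t ≤ zealR ε h H A x then zealP ε h
  else if zealR ε h H A x < t ∧ t ≤ H + zealC ε h + A then zealP ε h / Real.exp ε
  else 0

/-- Probability of the high-density band: the Zeal output lands in the
central band `[L(x), R(x)]` with probability `e^{ε/2}/(e^{ε/2}+1)`, and in the two
tails with probability `1/(e^{ε/2}+1)`. -/
theorem zeal_band_probability (ε h H A x : ℝ) (hε : 0 < ε) (hh : 0 < h)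
    (hx : x ∈ Set.Icc (H - h) (H + h)) :
    (∫ t in Set.Icc (zealL ε h H A x) (zealR ε h H A x), zealG ε h H A x t) =
      Real.exp (ε / 2) / (Real.exp (ε / 2) + 1) ∧
    (∫ t in Set.Ico (H - zealC ε h + A) (zealL ε h H A x) ∪
        Set.Ioc (zealR ε h H A x) (H + zealC ε h + A), zealG ε h H A x t) =
      1 / (Real.exp (ε / 2) + 1) := by
  obtain ⟨hx1, hx2⟩ := hx
  set E := Real.exp (ε / 2) with hE
  have hE1 : 1 < E := by
    rw [hE]
    have : (0:ℝ) < ε / 2 := by linarith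
    calc (1:ℝ) = Real.exp 0 := (Real.exp_zero).symm
    _ < Real.exp (ε/2) := Real.exp_lt_exp.mpr this
  have hE0 : 0 < E := lt_trans one_pos hE1
  have hEm : 0 < E - 1 := by linarith
  have hEp : 0 < E + 1 := by linarith
  have hexpε : Real.exp ε = E * E := by
    rw [hE, ← Real.exp_add]; ring_nf
  have hexppos : 0 < Real.exp ε := Real.exp_pos ε
  have hCsub : zealC ε h - h = 2 * h / (E - 1) := by
    unfold zealC; rw [← hE]; field_simp; ring
  have hCh : h ≤ zealC ε h := by
    have h2 : 0 < 2 * h / (E - 1) := by positivity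
    linarith
  have hLR : zealL ε h H A x ≤ zealR ε h H A x := by
    unfold zealR; linarith
  have key1 : zealL ε h H A x - (H - zealC ε h + A)
      = (zealC ε h + h) * (x - H + h) / (2 * h) := by
    unfold zealL; field_simp; ring
  have key2 : (H + zealC ε h + A) - zealR ε h H A x
      = (zealC ε h + h) * (H + h - x) / (2 * h) := by
    unfold zealR zealL; field_simp; ring
  have hChpos : 0 < zealC ε h + h := by linarith
  have hLmin : H - zealC ε h + A ≤ zealL ε h H A x := by
    have : 0 ≤ (zealC ε h + h) * (x - H + h) / (2 * h) := by
      apply div_nonneg _ (by linarith)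
      apply mul_nonneg (le_of_lt hChpos) (by linarith)
    linarith
  have hRmax : zealR ε h H A x ≤ H + zealC ε h + A := by
    have : 0 ≤ (zealC ε h + h) * (H + h - x) / (2 * h) := by
      apply div_nonneg _ (by linarith)
      apply mul_nonneg (le_of_lt hChpos) (by linarith)
    linarith
  constructor
  · have hg1 : Set.EqOn (zealG ε h H A x) (fun _ => zealP ε h)
        (Set.Icc (zealL ε h H A x) (zealR ε h H A x)) := by
      intro t ht
      simp only [zealG]
      rw [if_neg, if_pos ⟨ht.1, ht.2⟩]
      push_neg
      exact fun _ => ht.1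
    rw [setIntegral_congr_fun measurableSet_Icc hg1, setIntegral_const, measureReal_def,
      Real.volume_Icc, ENNReal.toReal_ofReal (by linarith)]
    have hRL : zealR ε h H A x - zealL ε h H A x = zealC ε h - h := by
      unfold zealR; ring
    rw [smul_eq_mul, hRL, hCsub]
    unfold zealP; rw [← hE, hexpε]
    field_simp
  · have hdisj : Disjoint
        (Set.Ico (H - zealC ε h + A) (zealL ε h H A x))
        (Set.Ioc (zealR ε h H A x) (H + zealC ε h + A)) := by
      rw [Set.disjoint_left]
      rintro t ⟨_, h1⟩ ⟨h2, _⟩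
      exact absurd (lt_of_lt_of_le h2 (le_of_lt h1)) (not_lt.mpr hLR)
    have hg2 : Set.EqOn (zealG ε h H A x) (fun _ => zealP ε h / Real.exp ε)
        (Set.Ico (H - zealC ε h + A) (zealL ε h H A x)) := by
      intro t ht
      simp only [zealG]
      rw [if_pos ⟨ht.1, ht.2⟩]
    have hg3 : Set.EqOn (zealG ε h H A x) (fun _ => zealP ε h / Real.exp ε)
        (Set.Ioc (zealR ε h H A x) (H + zealC ε h + A)) := by
      intro t ht
      simp only [zealG]
      rw [if_neg, if_neg, if_pos ⟨ht.1, ht.2⟩]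
      · push_neg
        exact fun _ => ht.1
      · push_neg
        exact fun _ => le_of_lt (lt_of_le_of_lt hLR ht.1)
    have hi2 : IntegrableOn (zealG ε h H A x)
        (Set.Ico (H - zealC ε h + A) (zealL ε h H A x)) volume := by
      apply (integrableOn_const measure_Ico_lt_top.ne).congr_fun
        hg2.symm measurableSet_Ico
    have hi3 : IntegrableOn (zealG ε h H A x)
        (Set.Ioc (zealR ε h H A x) (H + zealC ε h + A)) volume := by
      apply (integrableOn_const measure_Ioc_lt_top.ne).congr_fun
        hg3.symm measurableSet_Ioc
    rw [setIntegral_union hdisj measurableSet_Ioc hi2 hi3,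
      setIntegral_congr_fun measurableSet_Ico hg2,
      setIntegral_congr_fun measurableSet_Ioc hg3,
      setIntegral_const, setIntegral_const, measureReal_def, measureReal_def,
      Real.volume_Ico, Real.volume_Ioc,
      ENNReal.toReal_ofReal (by linarith), ENNReal.toReal_ofReal (by linarith)]
    simp only [smul_eq_mul]
    have hsum : (zealL ε h H A x - (H - zealC ε h + A))
        + ((H + zealC ε h + A) - zealR ε h H A x) = zealC ε h + h := by
      unfold zealR; ring
    have final : (zealC ε h + h) * (zealP ε h / Real.exp ε) = 1 / (E + 1) := by
      unfold zealP zealC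
      rw [← hE, hexpε]
      field_simp
      ring
    calc (zealL ε h H A x - (H - zealC ε h + A)) * (zealP ε h / Real.exp ε)
        + ((H + zealC ε h + A) - zealR ε h H A x) * (zealP ε h / Real.exp ε)
        = ((zealL ε h H A x - (H - zealC ε h + A))
          + ((H + zealC ε h + A) - zealR ε h H A x)) * (zealP ε h / Real.exp ε) := by ring
      _ = (zealC ε h + h) * (zealP ε h / Real.exp ε) := by rw [hsum]
      _ = 1 / (E + 1) := final
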